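/- Going Down for integral extensions of integrally closed domains (classical chain version). Let R ⊆ S be integral domains (S an R-algebra with injective structure map) with S integral over R and R integrally closed in its field of fractions. Let Q_{ℓ+1} ⊆ ⋯ ⊆ Q_{ℓ+r} be prime ideals of S, let P_i = Q_i ∩ R for i = ℓ+1,…,ℓ+r, and let P₁ ⊆ ⋯ ⊆ P_ℓ be prime ideals of R with P_ℓ ⊆ P_{ℓ+1}. Then there exist prime ideals Q₁,…,Q_ℓ of S with Q₁ ⊆ ⋯ ⊆ Q_ℓ ⊆ Q_{ℓ+1} and Q_j ∩ R = P_j for j = 1,…,ℓ. -/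

import Mathlib

open Polynomial

/-- Step A: an element of `p·S` satisfies a monic polynomial whose lower
coefficients lie in `p`. -/
lemma gd_exists_monic_coeff_mem {R S : Type*} [CommRing R] [CommRing S] [Algebra R S]
    [Algebra.IsIntegral R S] [Nontrivial S] (p : Ideal R) {x : S}
    (hx : x ∈ p.map (algebraMap R S)) :
    ∃ f : R[X], f.Monic ∧ 0 < f.natDegree ∧ (∀ k < f.natDegree, f.coeff k ∈ p) ∧
      aeval x f = 0 := by
  classical
  rw [Ideal.map, Ideal.span] at hx
  obtain ⟨T, hT, hxT⟩ := Submodule.mem_span_finite_of_mem_span hx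
  obtain ⟨c, -, hc⟩ := Submodule.mem_span_finset.1 hxT
  have hTp : ∀ t ∈ T, ∃ a : R, a ∈ p ∧ algebraMap R S a = t := by
    intro t ht
    obtain ⟨a, ha, rfl⟩ := hT ht
    exact ⟨a, ha, rfl⟩
  choose a hap hamap using hTp
  set A := Algebra.adjoin R ((T.image c : Finset S) : Set S) with hA
  haveI : Module.Finite R A :=
    ⟨(Submodule.fg_top _).mpr (fg_adjoin_of_finite (T.image c).finite_toSet
      (fun y _ => Algebra.IsIntegral.isIntegral y))⟩
  have hcA : ∀ t ∈ T, c t ∈ A := fun t ht =>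
    Algebra.subset_adjoin (by simp [Finset.mem_image]; exact ⟨t, ht, rfl⟩)
  have hxA : x ∈ A := by
    rw [← hc]
    refine Subalgebra.sum_mem _ (fun t ht => ?_)
    have : c t • t = a t ht • c t := by
      rw [smul_eq_mul, Algebra.smul_def, hamap, mul_comm]
    rw [this]
    exact A.smul_mem (hcA t ht) _
  set φ : Module.End R A := Algebra.lmul R A ⟨x, hxA⟩ with hφ
  have hrange : LinearMap.range φ ≤ p • (⊤ : Submodule R A) := by
    rintro _ ⟨y, rfl⟩
    have hxy : φ y = ∑ t ∈ T.attach,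
        a t.1 t.2 • (⟨c t.1 * (y : S), A.mul_mem (hcA t.1 t.2) y.2⟩ : A) := by
      apply Subtype.ext
      have hval : ((∑ t ∈ T.attach,
          a t.1 t.2 • (⟨c t.1 * (y : S), A.mul_mem (hcA t.1 t.2) y.2⟩ : A) : A) : S)
          = ∑ t ∈ T.attach, a t.1 t.2 • (c t.1 * (y : S)) := by
        push_cast; rfl
      rw [hval]
      have hval2 : ((φ y : A) : S) = x * (y : S) := rfl
      rw [hval2, ← hc, Finset.sum_mul, ← Finset.sum_attach T (fun t => c t • t * (y : S))]
      refine Finset.sum_congr rfl (fun t _ => ?_)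
      rw [smul_eq_mul, Algebra.smul_def, hamap]
      ring
    rw [hxy]
    exact Submodule.sum_mem _ (fun t _ =>
      Submodule.smul_mem_smul (hap t.1 t.2) Submodule.mem_top)
  obtain ⟨f, hmonic, -, hcoeff, haev⟩ :=
    LinearMap.exists_monic_and_coeff_mem_pow_and_aeval_eq_zero_of_range_le_smul R φ p hrange
  have haevx : aeval (⟨x, hxA⟩ : A) f = 0 := by
    have h1 : Algebra.lmul R A (aeval (⟨x, hxA⟩ : A) f) = 0 := by
      rw [← Polynomial.aeval_algHom_apply]; exact haev
    have := congrArg (fun g : Module.End R A => g 1) h1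
    simpa using this
  have haevS : aeval x f = 0 := by
    have := congrArg (A.val) haevx
    rw [← Polynomial.aeval_algHom_apply, map_zero] at this
    simpa using this
  have hdeg : 0 < f.natDegree := by
    rcases Nat.eq_zero_or_pos f.natDegree with h | h
    · exfalso
      have : f = 1 := Polynomial.Monic.natDegree_eq_zero hmonic |>.mp h
      rw [this] at haevS; simp at haevS
    · exact h
  exact ⟨f, hmonic, hdeg, fun k hk => Ideal.pow_le_self (Nat.sub_ne_zero_of_lt hk) (hcoeff k),
    haevS⟩

/-- Step B: if `x ∈ p·S` with `R` integrally closed, the non-leading coefficients of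
the minimal polynomial of `x` lie in `p`. -/
lemma gd_minpoly_coeff_mem {R S : Type*} [CommRing R] [IsDomain R] [CommRing S] [IsDomain S]
    [Algebra R S] [NoZeroSMulDivisors R S] [Algebra.IsIntegral R S] [IsIntegrallyClosed R]
    (p : Ideal R) [p.IsPrime] {x : S} (hx : x ∈ p.map (algebraMap R S)) :
    ∀ k < (minpoly R x).natDegree, (minpoly R x).coeff k ∈ p := by
  obtain ⟨f, hmonic, hdeg, hcoeff, haev⟩ := gd_exists_monic_coeff_mem p hx
  have hxint : IsIntegral R x := Algebra.IsIntegral.isIntegral x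
  have hdvd : minpoly R x ∣ f := minpoly.isIntegrallyClosed_dvd hxint haev
  set q := Ideal.Quotient.mk p
  have hfbar : f.map q = X ^ f.natDegree := by
    ext k
    rw [coeff_map, coeff_X_pow]
    rcases lt_trichotomy k f.natDegree with h | h | h
    · simp only [if_neg h.ne]
      exact Ideal.Quotient.eq_zero_iff_mem.2 (hcoeff k h)
    · simp only [h, if_pos rfl]
      have := hmonic
      rw [Polynomial.Monic, Polynomial.leadingCoeff] at this
      rw [this]; exact map_one q
    · simp only [if_neg h.ne']
      rw [coeff_eq_zero_of_natDegree_lt h, map_zero]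
  have hmdvd : (minpoly R x).map q ∣ X ^ f.natDegree := by
    rw [← hfbar]
    exact Polynomial.map_dvd q hdvd
  obtain ⟨i, _, hassoc⟩ := (dvd_prime_pow Polynomial.prime_X f.natDegree).1 hmdvd
  have hmbarmonic : ((minpoly R x).map q).Monic := (minpoly.monic hxint).map q
  have heqpow : (minpoly R x).map q = X ^ i :=
    Polynomial.eq_of_monic_of_associated hmbarmonic (monic_X_pow i) hassoc
  have hie : i = (minpoly R x).natDegree := by
    have := congrArg natDegree heqpow
    rwa [(minpoly.monic hxint).natDegree_map, natDegree_X_pow, eq_comm] at this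
  intro k hk
  have : ((minpoly R x).map q).coeff k = 0 := by
    rw [heqpow, coeff_X_pow, if_neg]
    omega
  rw [coeff_map] at this
  exact Ideal.Quotient.eq_zero_iff_mem.1 this

/-- Multiplying by a nonzero element of `R` does not change the degree of the
minimal polynomial. -/
lemma gd_natDegree_minpoly_eq {R S : Type*} [CommRing R] [IsDomain R] [CommRing S] [IsDomain S]
    [Algebra R S] [NoZeroSMulDivisors R S] [Algebra.IsIntegral R S] [IsIntegrallyClosed R]
    {r : R} (hr : r ≠ 0) (s : S) :
    (minpoly R (algebraMap R S r * s)).natDegree = (minpoly R s).natDegree := by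
  let K := FractionRing R
  let L := FractionRing S
  letI : Algebra K L := FractionRing.liftAlgebra R L
  haveI := FractionRing.isScalarTower_liftAlgebra R L
  have hs : IsIntegral R s := Algebra.IsIntegral.isIntegral s
  have hx : IsIntegral R (algebraMap R S r * s) := Algebra.IsIntegral.isIntegral _
  have e1 := minpoly.isIntegrallyClosed_eq_field_fractions K L hx
  have e2 := minpoly.isIntegrallyClosed_eq_field_fractions K L hs
  have n1 : (minpoly K (algebraMap S L (algebraMap R S r * s))).natDegree
      = (minpoly R (algebraMap R S r * s)).natDegree := by
    rw [e1, (minpoly.monic hx).natDegree_map]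
  have n2 : (minpoly K (algebraMap S L s)).natDegree = (minpoly R s).natDegree := by
    rw [e2, (minpoly.monic hs).natDegree_map]
  rw [← n1, ← n2]
  set u := algebraMap R K r with hu
  have hu0 : u ≠ 0 := fun h => hr (IsFractionRing.injective R K (by rw [← hu, h, map_zero]))
  set sL := algebraMap S L s with hsL
  have key : algebraMap S L (algebraMap R S r * s) = algebraMap K L u * sL := by
    rw [map_mul, ← IsScalarTower.algebraMap_apply, IsScalarTower.algebraMap_apply R K L]
  set xL := algebraMap S L (algebraMap R S r * s) with hxL
  have hsK : IsIntegral K sL := (hs.map (IsScalarTower.toAlgHom R S L)).tower_top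
  have hxK : IsIntegral K xL := (hx.map (IsScalarTower.toAlgHom R S L)).tower_top
  have d1 : minpoly K xL ∣ (minpoly K sL).scaleRoots u := by
    refine minpoly.dvd K xL ?_
    rw [key]
    exact scaleRoots_aeval_eq_zero (minpoly.aeval K sL)
  have d2 : minpoly K sL ∣ (minpoly K xL).scaleRoots u⁻¹ := by
    refine minpoly.dvd K sL ?_
    have h0 := scaleRoots_aeval_eq_zero (p := minpoly K xL) (r := u⁻¹) (minpoly.aeval K xL)
    have h1 : algebraMap K L u⁻¹ * xL = sL := by
      rw [key, ← mul_assoc, ← map_mul, inv_mul_cancel₀ hu0, map_one, one_mul]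
    rwa [h1] at h0
  have le1 : (minpoly K xL).natDegree ≤ (minpoly K sL).natDegree := by
    have := Polynomial.natDegree_le_of_dvd d1 (scaleRoots_ne_zero (minpoly.ne_zero hsK) u)
    rwa [natDegree_scaleRoots] at this
  have le2 : (minpoly K sL).natDegree ≤ (minpoly K xL).natDegree := by
    have := Polynomial.natDegree_le_of_dvd d2 (scaleRoots_ne_zero (minpoly.ne_zero hxK) u⁻¹)
    rwa [natDegree_scaleRoots] at this
  omega

/-- Going down, single step. -/
lemma gd_step {R S : Type*} [CommRing R] [IsDomain R] [CommRing S] [IsDomain S] [Algebra R S]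
    (hinj : Function.Injective (algebraMap R S)) [Algebra.IsIntegral R S] [IsIntegrallyClosed R]
    (p : Ideal R) [p.IsPrime] (Q' : Ideal S) [Q'.IsPrime]
    (hle : p ≤ Q'.comap (algebraMap R S)) :
    ∃ Q : Ideal S, Q.IsPrime ∧ Q ≤ Q' ∧ Q.comap (algebraMap R S) = p := by
  haveI : NoZeroSMulDivisors R S :=
    ⟨fun {c y} h => by
      rw [Algebra.smul_def] at h
      rcases mul_eq_zero.1 h with h | h
      · exact Or.inl (hinj (by rw [h, map_zero]))
      · exact Or.inr h⟩
  classical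
  set T : Submonoid S :=
    { carrier := {z | ∃ r ∉ p, ∃ s ∉ Q', algebraMap R S r * s = z}
      one_mem' := ⟨1, fun h => (Ideal.IsPrime.ne_top ‹p.IsPrime›) (p.eq_top_of_isUnit_mem h
        isUnit_one), 1, fun h => (Ideal.IsPrime.ne_top ‹Q'.IsPrime›)
        (Q'.eq_top_of_isUnit_mem h isUnit_one), by simp⟩
      mul_mem' := by
        rintro _ _ ⟨r₁, hr₁, s₁, hs₁, rfl⟩ ⟨r₂, hr₂, s₂, hs₂, rfl⟩
        refine ⟨r₁ * r₂, fun h => ?_, s₁ * s₂, fun h => ?_, by push_cast [map_mul]; ring⟩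
        · rcases (Ideal.IsPrime.mem_or_mem ‹p.IsPrime› h) with h | h
          exacts [hr₁ h, hr₂ h]
        · rcases (Ideal.IsPrime.mem_or_mem ‹Q'.IsPrime› h) with h | h
          exacts [hs₁ h, hs₂ h] } with hT
  have hdisj : Disjoint ((p.map (algebraMap R S) : Ideal S) : Set S) (T : Set S) := by
    rw [Set.disjoint_left]
    rintro z hz ⟨r, hrp, s, hsQ, rfl⟩
    have hr0 : r ≠ 0 := fun h => hrp (h ▸ p.zero_mem)
    have hs : IsIntegral R s := Algebra.IsIntegral.isIntegral s
    have hb : (minpoly R s).Monic := minpoly.monic hs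
    set d := (minpoly R s).natDegree with hd
    have hdpos : 0 < d := minpoly.natDegree_pos hs
    set x := algebraMap R S r * s with hx
    have hcx : aeval x ((minpoly R s).scaleRoots r) = 0 :=
      scaleRoots_aeval_eq_zero (minpoly.aeval R s)
    have hdvd : minpoly R x ∣ (minpoly R s).scaleRoots r :=
      minpoly.isIntegrallyClosed_dvd (Algebra.IsIntegral.isIntegral x) hcx
    have hdeg : (minpoly R x).natDegree = d := gd_natDegree_minpoly_eq hr0 s
    -- equality of minpoly x and the scaled polynomial
    have hmeq : minpoly R x = (minpoly R s).scaleRoots r := by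
      obtain ⟨t, ht⟩ := hdvd
      have hmx : (minpoly R x).Monic := minpoly.monic (Algebra.IsIntegral.isIntegral x)
      have hsc : ((minpoly R s).scaleRoots r).Monic := (monic_scaleRoots_iff r).2 hb
      have ht0 : t ≠ 0 := by
        rintro rfl
        rw [mul_zero] at ht
        exact (scaleRoots_ne_zero (minpoly.ne_zero hs) r) ht
      have hdt : t.natDegree = 0 := by
        have := congrArg natDegree ht
        rw [natDegree_scaleRoots, Polynomial.natDegree_mul (minpoly.ne_zero
          (Algebra.IsIntegral.isIntegral x)) ht0, hdeg] at this
        omega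
      have htm : t.Monic := by
        have hl := congrArg leadingCoeff ht
        rw [leadingCoeff_mul, hmx.leadingCoeff, one_mul] at hl
        rw [Monic, ← hl, hsc.leadingCoeff]
      have : t = 1 := by
        rw [Polynomial.eq_one_of_monic_natDegree_zero htm hdt]
      rw [ht, this, mul_one]
    -- coefficients of minpoly s lie in p
    have hbcoeff : ∀ k < d, (minpoly R s).coeff k ∈ p := by
      intro k hk
      have h1 : ((minpoly R s).scaleRoots r).coeff k ∈ p := by
        rw [← hmeq]
        exact gd_minpoly_coeff_mem p hz k (by rw [hdeg]; exact hk)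
      rw [coeff_scaleRoots] at h1
      rcases Ideal.IsPrime.mem_or_mem ‹p.IsPrime› h1 with h | h
      · exact h
      · exact absurd (Ideal.IsPrime.mem_of_pow_mem ‹p.IsPrime› _ h) hrp
    -- conclude s ∈ Q', contradiction
    have hspow : s ^ d ∈ Q' := by
      have haev := minpoly.aeval R s
      rw [Polynomial.aeval_eq_sum_range] at haev
      rw [Finset.sum_range_succ, ← hd, hb.coeff_natDegree, one_smul] at haev
      have : s ^ d = -∑ i ∈ Finset.range d, (minpoly R s).coeff i • s ^ i := by
        rw [eq_neg_iff_add_eq_zero, add_comm]; exact haev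
      rw [this]
      refine Q'.neg_mem (Ideal.sum_mem _ (fun i hi => ?_))
      rw [Algebra.smul_def]
      exact Q'.mul_mem_right _ (hle (hbcoeff i (Finset.mem_range.1 hi)))
    exact hsQ (Ideal.IsPrime.mem_of_pow_mem ‹Q'.IsPrime› d hspow)
  obtain ⟨Q, hQp, hQle, hQdisj⟩ := Ideal.exists_le_prime_disjoint _ T hdisj
  refine ⟨Q, hQp, ?_, ?_⟩
  · intro z hzQ
    by_contra hzQ'
    exact Set.disjoint_left.1 hQdisj hzQ
      ⟨1, fun h => (Ideal.IsPrime.ne_top ‹p.IsPrime›) (p.eq_top_of_isUnit_mem h isUnit_one),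
        z, hzQ', by simp⟩
  · apply le_antisymm
    · intro a haQ
      by_contra hap
      exact Set.disjoint_left.1 hQdisj haQ
        ⟨a, hap, 1, fun h => (Ideal.IsPrime.ne_top ‹Q'.IsPrime›)
          (Q'.eq_top_of_isUnit_mem h isUnit_one), by simp⟩
    · intro a hap
      exact Ideal.mem_comap.2 (hQle (Ideal.mem_map_of_mem _ hap))

/-- Going down, chain version below a fixed prime. -/
lemma gd_chain {R S : Type*} [CommRing R] [IsDomain R] [CommRing S] [IsDomain S] [Algebra R S]
    (hinj : Function.Injective (algebraMap R S)) [Algebra.IsIntegral R S] [IsIntegrallyClosed R] :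
    ∀ (n : ℕ) (P : Fin n → Ideal R), (∀ j, (P j).IsPrime) → Monotone P →
    ∀ (Q0 : Ideal S), Q0.IsPrime → (∀ j, P j ≤ Q0.comap (algebraMap R S)) →
    ∃ Q' : Fin n → Ideal S, (∀ j, (Q' j).IsPrime) ∧ Monotone Q' ∧ (∀ j, Q' j ≤ Q0) ∧
      ∀ j, (Q' j).comap (algebraMap R S) = P j := by
  intro n
  induction n with
  | zero =>
    intro P _ _ Q0 _ _
    exact ⟨Fin.elim0, fun j => j.elim0, fun i j _ => i.elim0, fun j => j.elim0, fun j => j.elim0⟩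
  | succ n ih =>
    intro P hP hM Q0 hQ0 hlink
    haveI := hQ0
    haveI := hP (Fin.last n)
    obtain ⟨Qn, hQnp, hQnle, hQncomap⟩ := gd_step hinj (P (Fin.last n)) Q0 (hlink _)
    haveI := hQnp
    obtain ⟨Q', h1, h2, h3, h4⟩ := ih (fun j => P j.castSucc) (fun j => hP _)
      (fun i j hij => hM (Fin.castSucc_le_castSucc_iff.2 hij)) Qn hQnp
      (fun j => by rw [hQncomap]; exact hM (Fin.le_last _))
    refine ⟨Fin.snoc Q' Qn, ?_, ?_, ?_, ?_⟩
    · intro j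
      refine Fin.lastCases ?_ ?_ j
      · rw [Fin.snoc_last]; exact hQnp
      · intro i; rw [Fin.snoc_castSucc]; exact h1 i
    · intro i j hij
      refine Fin.lastCases (motive := fun j => i ≤ j →
        (Fin.snoc Q' Qn : Fin (n+1) → Ideal S) i ≤ (Fin.snoc Q' Qn : Fin (n+1) → Ideal S) j)
        ?_ ?_ j hij
      · intro _
        refine Fin.lastCases ?_ ?_ i
        · exact le_refl _
        · intro i'
          rw [Fin.snoc_last, Fin.snoc_castSucc]
          exact h3 i'
      · intro j'
        refine Fin.lastCases
          (motive := fun i => i ≤ j'.castSucc → (Fin.snoc Q' Qn : Fin (n+1) → Ideal S) i ≤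
            (Fin.snoc Q' Qn : Fin (n+1) → Ideal S) j'.castSucc)
          ?_ ?_ i
        · intro hij'
          exact absurd (lt_of_le_of_lt hij' (Fin.castSucc_lt_last j')) (lt_irrefl _)
        · intro i' hij'
          rw [Fin.snoc_castSucc, Fin.snoc_castSucc]
          exact h2 (Fin.castSucc_le_castSucc_iff.1 hij')
    · intro j
      refine Fin.lastCases ?_ ?_ j
      · rw [Fin.snoc_last]; exact hQnle
      · intro i; rw [Fin.snoc_castSucc]; exact le_trans (h3 i) hQnle
    · intro j
      refine Fin.lastCases ?_ ?_ j
      · rw [Fin.snoc_last]; exact hQncomap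
      · intro i; rw [Fin.snoc_castSucc]; exact h4 i

theorem stmt_17 {R S : Type*} [CommRing R] [IsDomain R] [CommRing S] [IsDomain S]
    [Algebra R S] (hinj : Function.Injective (algebraMap R S))
    [Algebra.IsIntegral R S] [IsIntegrallyClosed R]
    {ℓ r : ℕ} (hℓ : 0 < ℓ) (hr : 0 < r)
    (Q : Fin r → Ideal S) (hQprime : ∀ i, (Q i).IsPrime) (hQmono : Monotone Q)
    (P : Fin ℓ → Ideal R) (hPprime : ∀ j, (P j).IsPrime) (hPmono : Monotone P)
    (hlink : P ⟨ℓ - 1, by omega⟩ ≤ (Q ⟨0, hr⟩).comap (algebraMap R S)) :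
    ∃ Q' : Fin ℓ → Ideal S, (∀ j, (Q' j).IsPrime) ∧ Monotone Q' ∧
      Q' ⟨ℓ - 1, by omega⟩ ≤ Q ⟨0, hr⟩ ∧
      ∀ j, (Q' j).comap (algebraMap R S) = P j := by
  obtain ⟨Q', h1, h2, h3, h4⟩ := gd_chain hinj ℓ P hPprime hPmono (Q ⟨0, hr⟩) (hQprime _)
    (fun j => le_trans (hPmono (show j ≤ ⟨ℓ - 1, by omega⟩ by
      rw [Fin.le_def]; exact Nat.le_sub_one_of_lt j.2)) hlink)
  exact ⟨Q', h1, h2, h3 _, h4⟩
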